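/- Let (V; f, g) be a dual-modular instance normalized so that f(V) = g(V) = 1, so that every allocation (x, y) ∈ B≥_f × B≤_g is a pair of probability distributions on V. Suppose D = (D_n)_{n∈ℕ} is a family of divergences, where each D_n assigns a real number D_n(P ‖ Q) ≥ 0 to every pair of probability distributions P, Q on an n-element set, with D_n(P ‖ Q) = 0 iff P = Q, and D satisfies the data processing inequality: for every row-stochastic n×m matrix T (T_{ij} ≥ 0, Σ_j T_{ij} = 1), acting on distributions by (TP)(j) = Σ_i P(i)·T_{ij}, one has D_m(TP ‖ TQ) ≤ D_n(P ‖ Q) for all distributions P, Q on an n-element set. Then every locally maximin allocation (x, y) minimizes D_{|V|}(x ‖ y) over all allocations in B≥_f × B≤_g. -/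

import Mathlib

open Finset

variable {V : Type*} [Fintype V] [DecidableEq V]

/-- A set function is supermodular. -/
def Supermodular (f : Finset V → ℝ) : Prop :=
  ∀ A B : Finset V, f A + f B ≤ f (A ∩ B) + f (A ∪ B)

/-- A set function is submodular. -/
def Submodular (g : Finset V → ℝ) : Prop :=
  ∀ A B : Finset V, g (A ∩ B) + g (A ∪ B) ≤ g A + g B

/-- A set function is monotone. -/
def MonotoneFn (f : Finset V → ℝ) : Prop :=
  ∀ A B : Finset V, A ⊆ B → f A ≤ f B

/-- A set function is strictly monotone. -/
def StrictMonoFn (g : Finset V → ℝ) : Prop :=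
  ∀ A B : Finset V, A ⊂ B → g A < g B

/-- A dual-modular instance `(V; f, g)`: `f` is a nonnegative monotone supermodular
reward function, `g` is a nonnegative strictly monotone submodular cost function,
both vanishing on the empty set. -/
structure DualModular (f g : Finset V → ℝ) : Prop where
  f_nonneg : ∀ A, 0 ≤ f A
  g_nonneg : ∀ A, 0 ≤ g A
  f_empty : f ∅ = 0
  g_empty : g ∅ = 0
  f_mono : MonotoneFn f
  g_strictMono : StrictMonoFn g
  f_supermodular : Supermodular f
  g_submodular : Submodular g

/-- Density of a subset. -/
noncomputable def density (f g : Finset V → ℝ) (S : Finset V) : ℝ := f S / g S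

/-- Marginal contribution `h(S|A) = h(S ∪ A) - h(A)`. -/
def marginal (h : Finset V → ℝ) (S A : Finset V) : ℝ := h (S ∪ A) - h A

/-- Marginal density `ρ(S|A) = f(S|A)/g(S|A)`. -/
noncomputable def margDensity (f g : Finset V → ℝ) (S A : Finset V) : ℝ :=
  marginal f S A / marginal g S A

/-- `S_{<i}`: the union of earlier parts in an indexed family. -/
def below {k : ℕ} (S : Fin k → Finset V) (i : Fin k) : Finset V :=
  (Finset.univ.filter (fun j => j < i)).biUnion S

/-- The density decomposition `V = S₁ ∪ … ∪ S_k`: each `S i` is a nonempty maximal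
densest subset of the remaining instance with marginal functions. -/
structure IsDensityDecomposition (f g : Finset V → ℝ) {k : ℕ} (S : Fin k → Finset V) :
    Prop where
  nonempty : ∀ i, (S i).Nonempty
  disj : ∀ i, Disjoint (S i) (below S i)
  cover : Finset.univ.biUnion S = (Finset.univ : Finset V)
  maxDensity : ∀ i, ∀ T : Finset V, T.Nonempty → Disjoint T (below S i) →
    margDensity f g T (below S i) ≤ margDensity f g (S i) (below S i)
  maximal : ∀ i, ∀ T : Finset V, T.Nonempty → Disjoint T (below S i) →
    margDensity f g (S i) (below S i) ≤ margDensity f g T (below S i) → T ⊆ S i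

/-- `ρ_i`, the density of the `i`-th component of the decomposition. -/
noncomputable def decompDensity (f g : Finset V → ℝ) {k : ℕ} (S : Fin k → Finset V)
    (i : Fin k) : ℝ :=
  margDensity f g (S i) (below S i)

/-- Membership in the base contrapolymatroid `B≥_f`. -/
def memBf (f : Finset V → ℝ) (x : V → ℝ) : Prop :=
  (∀ v, 0 ≤ x v) ∧ (∑ v, x v = f Finset.univ) ∧ ∀ A : Finset V, f A ≤ ∑ v ∈ A, x v

/-- Membership in the base polymatroid `B≤_g`. -/
def memBg (g : Finset V → ℝ) (y : V → ℝ) : Prop :=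
  (∀ v, 0 ≤ y v) ∧ (∑ v, y v = g Finset.univ) ∧ ∀ A : Finset V, ∑ v ∈ A, y v ≤ g A

/-- An allocation is a pair `(x, y) ∈ B≥_f × B≤_g`. -/
def Allocation (f g : Finset V → ℝ) (x y : V → ℝ) : Prop := memBf f x ∧ memBg g y

/-- The locally maximin condition for an allocation. -/
def LocallyMaximin (f g : Finset V → ℝ) (x y : V → ℝ) : Prop :=
  ∀ ρ : ℝ, 0 < ρ →
    (∑ v ∈ Finset.univ.filter (fun v => ρ ≤ x v / y v), x v
       = f (Finset.univ.filter (fun v => ρ ≤ x v / y v))) ∧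
    (∑ v ∈ Finset.univ.filter (fun v => ρ ≤ x v / y v), y v
       = g (Finset.univ.filter (fun v => ρ ≤ x v / y v)))

/-- The multiset of induced densities, sorted in non-increasing order. -/
noncomputable def sortedDensities (x y : V → ℝ) : List ℝ :=
  ((Finset.univ.val.map (fun v => x v / y v)).sort (· ≤ ·)).reverse

/-- An allocation is lexicographically optimal if its non-increasingly sorted density
vector is lexicographically minimal among all allocations. -/
def LexOptimal (f g : Finset V → ℝ) (x y : V → ℝ) : Prop :=
  Allocation f g x y ∧
  ∀ x' y' : V → ℝ, Allocation f g x' y' → sortedDensities x y ≤ sortedDensities x' y'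

/-- The hockey-stick divergence `HS_γ(x ‖ y)`. -/
noncomputable def HS (γ : ℝ) (x y : V → ℝ) : ℝ := ∑ u, max (x u - γ * y u) 0

/-- The `θ`-divergence `D_θ(x ‖ y) = Σ_u y_u · θ(x_u / y_u)`. -/
noncomputable def Dtheta (θ : ℝ → ℝ) (x y : V → ℝ) : ℝ := ∑ u, y u * θ (x u / y u)

/-- Permutations of `V`, encoded as bijections to positions `Fin |V|`;
`u ≺_σ v` iff `σ u < σ v`. -/
abbrev Perms (V : Type*) [Fintype V] := V ≃ Fin (Fintype.card V)

/-- `h^σ(u)`: the marginal contribution of `u` given the elements preceding it in `σ`. -/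
def permVal (h : Finset V → ℝ) (σ : Perms V) (u : V) : ℝ :=
  h (insert u (Finset.univ.filter (fun w => σ w < σ u))) -
    h (Finset.univ.filter (fun w => σ w < σ u))

/-- A probability distribution on permutations of `V`. -/
def IsDist (p : Perms V → ℝ) : Prop := (∀ σ, 0 ≤ p σ) ∧ ∑ σ, p σ = 1

/-- `h^p(u) = Σ_σ p_σ · h^σ(u)`. -/
noncomputable def distVal (h : Finset V → ℝ) (p : Perms V → ℝ) (u : V) : ℝ :=
  ∑ σ, p σ * permVal h σ u

/-- The density induced by a solution `(p, q)`. -/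
noncomputable def solDensity (f g : Finset V → ℝ) (p q : Perms V → ℝ) (v : V) : ℝ :=
  distVal f p v / distVal g q v

/-- A solution `(p, q)` is locally maximin if whenever `u` has strictly larger induced
density than `v`, every permutation with positive weight puts `u` before `v`. -/
def LocallyMaximinSol (f g : Finset V → ℝ) (p q : Perms V → ℝ) : Prop :=
  ∀ u v : V, solDensity f g p q v < solDensity f g p q u →
    ∀ σ : Perms V, (0 < p σ ∨ 0 < q σ) → σ u < σ v

/-- The convex-program objective `Φ_θ(p, q) = D_θ(f^p ‖ g^q)`. -/
noncomputable def Phi (θ : ℝ → ℝ) (f g : Finset V → ℝ) (p q : Perms V → ℝ) : ℝ :=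
  Dtheta θ (distVal f p) (distVal g q)

/-! ### Auxiliary lemmas for the proof -/

section Aux


lemma core_convex_order (S : Finset ℝ) (c ψ : ℝ → ℝ)
    (hψ : ConcaveOn ℝ Set.univ ψ)
    (hmass : ∑ t ∈ S, c t = 0)
    (hmean : ∑ t ∈ S, c t * t = 0)
    (hHS : ∀ γ : ℝ, ∑ t ∈ S, c t * max (t - γ) 0 ≤ 0) :
    0 ≤ ∑ t ∈ S, c t * ψ t := by
  set M := S.card with hM
  set e := S.orderIsoOfFin rfl with he
  set a : ℕ → ℝ := fun i => if h : i < M then (e ⟨i, h⟩ : ℝ) else 0 with ha_def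
  -- transfer between sums over S and sums over range M
  have transfer : ∀ F : ℝ → ℝ, ∑ t ∈ S, F t = ∑ i ∈ range M, F (a i) := by
    intro F
    rw [← Finset.sum_coe_sort S F, ← Equiv.sum_comp e.toEquiv (fun t => F (t : ℝ))]
    rw [← Fin.sum_univ_eq_sum_range (fun i => F (a i)) M]
    refine Finset.sum_congr rfl fun i _ => ?_
    simp only [ha_def, i.isLt, dif_pos, Fin.eta]
    rw [dif_pos (show (i:ℕ) < M from i.isLt)]
    rfl
  have hmono : ∀ {i j : ℕ}, i < j → j < M → a i < a j := by
    intro i j hij hj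
    have hi : i < M := lt_trans hij hj
    simp only [ha_def, dif_pos hi, dif_pos hj]
    exact Subtype.coe_lt_coe.mpr (e.strictMono (by exact hij))
  have hmono' : ∀ {i j : ℕ}, i ≤ j → j < M → a i ≤ a j := by
    intro i j hij hj
    rcases eq_or_lt_of_le hij with h | h
    · subst h; rfl
    · exact (hmono h hj).le
  set d : ℕ → ℝ := fun i => (ψ (a (i+1)) - ψ (a i)) / (a (i+1) - a i) with hd_def
  have hd_step : ∀ i : ℕ, i + 2 < M → d (i+1) ≤ d i := by
    intro i h
    have h1 : a i < a (i+1) := hmono (by omega) (by omega)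
    have h2 : a (i+1) < a (i+2) := hmono (by omega) h
    have := hψ.slope_anti_adjacent (Set.mem_univ (a i)) (Set.mem_univ (a (i+2))) h1 h2
    simpa [hd_def] using this
  set w : ℕ → ℝ := fun j => d (j-1) - d j with hw_def
  have hw : ∀ j ∈ Ico 1 (M-1), 0 ≤ w j := by
    intro j hj
    simp only [mem_Ico] at hj
    have : d j ≤ d (j-1) := by
      have : (j - 1) + 1 = j := by omega
      rw [← this]
      exact hd_step (j-1) (by omega)
    simpa [hw_def] using sub_nonneg.mpr this
  have sum_w : ∀ k : ℕ, ∑ j ∈ Ico 1 (k+1), w j = d 0 - d k := by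
    intro k
    induction k with
    | zero => simp
    | succ k ih =>
      rw [Finset.sum_Ico_succ_top (by omega), ih]
      simp only [hw_def]
      have : (k + 1) - 1 = k := by omega
      rw [this]; ring
  -- key pointwise identity
  have key : ∀ k, k < M →
      ψ (a k) = ψ (a 0) + d 0 * (a k - a 0)
        - ∑ j ∈ Ico 1 (M-1), w j * max (a k - a j) 0 := by
    intro k
    induction k with
    | zero =>
      intro _
      have : ∑ j ∈ Ico 1 (M-1), w j * max (a 0 - a j) 0 = 0 := by
        refine Finset.sum_eq_zero fun j hj => ?_
        simp only [mem_Ico] at hj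
        have : a 0 < a j := hmono (by omega) (by omega)
        rw [max_eq_right (by linarith)]
        ring
      rw [this]; ring
    | succ k ih =>
      intro hk1
      have hkM : k < M := by omega
      have hIH := ih hkM
      have hΔpos : a k < a (k+1) := hmono (by omega) hk1
      have hψstep : ψ (a (k+1)) = ψ (a k) + d k * (a (k+1) - a k) := by
        have hne : a (k+1) - a k ≠ 0 := sub_ne_zero.mpr (ne_of_gt hΔpos)
        simp only [hd_def]
        field_simp
        ring
      -- compute the two truncation sums
      have hksum : ∀ k', k' < M →
          ∑ j ∈ Ico 1 (M-1), w j * max (a k' - a j) 0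
            = ∑ j ∈ Ico 1 (min (k'+1) (M-1)), w j * (a k' - a j) := by
        intro k' hk'
        have hsplit : Ico 1 (M-1) = Ico 1 (min (k'+1) (M-1)) ∪ Ico (min (k'+1) (M-1)) (M-1) := by
          rw [Finset.Ico_union_Ico_eq_Ico] <;> omega
        rw [hsplit, Finset.sum_union (Finset.Ico_disjoint_Ico_consecutive _ _ _)]
        have h2 : ∑ j ∈ Ico (min (k'+1) (M-1)) (M-1), w j * max (a k' - a j) 0 = 0 := by
          refine Finset.sum_eq_zero fun j hj => ?_
          simp only [mem_Ico] at hj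
          have : a k' ≤ a j := hmono' (by omega) (by omega)
          rw [max_eq_right (by linarith)]; ring
        have h1 : ∀ j ∈ Ico 1 (min (k'+1) (M-1)), w j * max (a k' - a j) 0 = w j * (a k' - a j) := by
          intro j hj
          simp only [mem_Ico] at hj
          have : a j ≤ a k' := hmono' (by omega) hk'
          rw [max_eq_left (by linarith)]
        rw [Finset.sum_congr rfl h1, h2, add_zero]
      rw [hksum (k+1) hk1, hψstep, hIH, hksum k hkM]
      -- now both sides are sums over explicit Ico sets
      have hmin1 : min (k+1+1) (M-1) = min (k+2) (M-1) := rfl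
      rcases le_or_gt (k+2) (M-1) with hcase | hcase
      · -- k+2 ≤ M-1
        rw [min_eq_left hcase, min_eq_left (by omega)]
        rw [Finset.sum_Ico_succ_top (by omega : 1 ≤ k+1)]
        have expand : ∑ j ∈ Ico 1 (k+1), w j * (a (k+1) - a j)
            = ∑ j ∈ Ico 1 (k+1), w j * (a k - a j) + (∑ j ∈ Ico 1 (k+1), w j) * (a (k+1) - a k) := by
          rw [Finset.sum_mul, ← Finset.sum_add_distrib]
          exact Finset.sum_congr rfl fun j _ => by ring
        rw [expand, sum_w k]
        simp only [hw_def]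
        have : (k+1) - 1 = k := by omega
        rw [this]
        ring
      · -- k+2 > M-1, so k+1 = M-1 (since k+1 < M)
        have hk1eq : k + 1 = M - 1 := by omega
        rw [min_eq_right (by omega), min_eq_right (by omega)]
        have expand : ∑ j ∈ Ico 1 (M-1), w j * (a (k+1) - a j)
            = ∑ j ∈ Ico 1 (M-1), w j * (a k - a j) + (∑ j ∈ Ico 1 (M-1), w j) * (a (k+1) - a k) := by
          rw [Finset.sum_mul, ← Finset.sum_add_distrib]
          exact Finset.sum_congr rfl fun j _ => by ring
        rw [expand, ← hk1eq, sum_w k]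
        ring
  -- final computation
  rw [transfer]
  have expand : ∀ i ∈ range M, c (a i) * ψ (a i)
      = c (a i) * ψ (a 0) + d 0 * (c (a i) * a i - c (a i) * a 0)
        - ∑ j ∈ Ico 1 (M-1), w j * (c (a i) * max (a i - a j) 0) := by
    intro i hi
    have h1 : ∑ j ∈ Ico 1 (M-1), w j * (c (a i) * max (a i - a j) 0)
        = c (a i) * ∑ j ∈ Ico 1 (M-1), w j * max (a i - a j) 0 := by
      rw [Finset.mul_sum]
      exact Finset.sum_congr rfl fun j _ => by ring
    rw [key i (Finset.mem_range.mp hi), h1]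
    ring
  rw [Finset.sum_congr rfl expand]
  rw [Finset.sum_sub_distrib, Finset.sum_add_distrib]
  have e1 : ∑ i ∈ range M, c (a i) * ψ (a 0) = 0 := by
    rw [← Finset.sum_mul, ← transfer (fun t => c t), hmass, zero_mul]
  have e2 : ∑ i ∈ range M, d 0 * (c (a i) * a i - c (a i) * a 0) = 0 := by
    rw [← Finset.mul_sum, Finset.sum_sub_distrib, ← Finset.sum_mul]
    rw [← transfer (fun t => c t * t), ← transfer (fun t => c t), hmass, hmean]
    ring
  rw [e1, e2, add_zero, zero_sub]
  rw [Finset.sum_comm]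
  have : ∀ j ∈ Ico 1 (M-1), ∑ i ∈ range M, w j * (c (a i) * max (a i - a j) 0)
      = w j * ∑ t ∈ S, c t * max (t - a j) 0 := by
    intro j _
    rw [transfer (fun t => c t * max (t - a j) 0), Finset.mul_sum]
  rw [Finset.sum_congr rfl this]
  rw [neg_nonneg]
  refine Finset.sum_nonpos fun j hj => ?_
  exact mul_nonpos_of_nonneg_of_nonpos (hw j hj) (hHS (a j))


lemma exists_transport {V : Type*} [Fintype V] [DecidableEq V]
    (x y x' y' : V → ℝ)
    (hx : ∀ v, 0 ≤ x v) (hy : ∀ v, 0 < y v)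
    (hx' : ∀ v, 0 ≤ x' v) (hy' : ∀ v, 0 < y' v)
    (hmx : ∑ v, x' v = ∑ v, x v) (hmy : ∑ v, y' v = ∑ v, y v)
    (hdom : ∀ γ : ℝ, ∑ v, max (x v - γ * y v) 0 ≤ ∑ v, max (x' v - γ * y' v) 0) :
    ∃ T : V → V → ℝ, (∀ u v, 0 ≤ T u v) ∧ (∀ u, ∑ v, T u v = 1) ∧
      (∀ v, ∑ u, x' u * T u v = x v) ∧ (∀ v, ∑ u, y' u * T u v = y v) := by
  rcases isEmpty_or_nonempty V with hV | hV
  · exact ⟨fun _ _ => 1, fun u => (hV.false u).elim, fun u => (hV.false u).elim,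
      fun v => (hV.false v).elim, fun v => (hV.false v).elim⟩
  by_contra hcon
  -- the set of reachable pairs
  set Φ : (V → V → ℝ) →ₗ[ℝ] ((V → ℝ) × (V → ℝ)) :=
    { toFun := fun T => (fun v => ∑ u, x' u * T u v, fun v => ∑ u, y' u * T u v)
      map_add' := by
        intro T T'
        refine Prod.ext (funext fun v => ?_) (funext fun v => ?_) <;>
          simp [mul_add, Finset.sum_add_distrib]
      map_smul' := by
        intro r T
        refine Prod.ext (funext fun v => ?_) (funext fun v => ?_) <;>
          simp [Finset.mul_sum, mul_left_comm] } with hΦ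
  set 𝒯 : Set (V → V → ℝ) := Set.univ.pi (fun _ => stdSimplex ℝ V) with h𝒯
  have hconv : Convex ℝ (Φ '' 𝒯) :=
    (convex_pi fun i _ => convex_stdSimplex ℝ V).linear_image Φ
  have hclosed : IsClosed (Φ '' 𝒯) :=
    ((isCompact_univ_pi fun _ => isCompact_stdSimplex ℝ V).image
      Φ.continuous_of_finiteDimensional).isClosed
  have hnotmem : (x, y) ∉ Φ '' 𝒯 := by
    rintro ⟨T, hT, hTeq⟩
    refine hcon ⟨T, fun u v => (hT u (Set.mem_univ u)).1 v, fun u => (hT u (Set.mem_univ u)).2,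
      fun v => ?_, fun v => ?_⟩
    · exact congrFun (congrArg Prod.fst hTeq) v
    · exact congrFun (congrArg Prod.snd hTeq) v
  obtain ⟨φ, r, hφxy, hφK⟩ := geometric_hahn_banach_point_closed hconv hclosed hnotmem
  set α : V → ℝ := fun v => φ (Pi.single v 1, 0) with hα
  set β : V → ℝ := fun v => φ (0, Pi.single v 1) with hβ
  have hφ_eval : ∀ z w : V → ℝ, φ (z, w) = ∑ v, z v * α v + ∑ v, w v * β v := by
    intro z w
    have hzw : (z, w) = ∑ v : V, (z v • ((Pi.single v 1 : V → ℝ), (0 : V → ℝ))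
        + w v • ((0 : V → ℝ), (Pi.single v 1 : V → ℝ))) := by
      refine Prod.ext (funext fun u => ?_) (funext fun u => ?_) <;>
      · simp only [Prod.fst_sum, Prod.snd_sum, Finset.sum_apply, Prod.fst_add, Prod.snd_add,
          Pi.add_apply, Prod.smul_fst, Prod.smul_snd, Pi.smul_apply, smul_eq_mul, Pi.zero_apply,
          mul_zero, add_zero, zero_add, Pi.single_apply]
        simp
    rw [hzw, map_sum, ← Finset.sum_add_distrib]
    refine Finset.sum_congr rfl fun v _ => ?_
    have hsplit : z v • ((Pi.single v 1 : V → ℝ), (0 : V → ℝ))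
        + w v • ((0 : V → ℝ), (Pi.single v 1 : V → ℝ))
        = (z v • (Pi.single v 1 : V → ℝ), w v • (Pi.single v 1 : V → ℝ)) := by
      refine Prod.ext ?_ ?_ <;> simp
    rw [map_add, map_smul, map_smul]
    simp [hα, hβ]
  -- minimizing column for each u
  have hmin : ∀ u : V, ∃ v0 : V, ∀ v : V, α v0 * x' u + β v0 * y' u ≤ α v * x' u + β v * y' u := by
    intro u
    obtain ⟨v0, _, hv0⟩ := Finset.exists_min_image Finset.univ
      (fun v => α v * x' u + β v * y' u) univ_nonempty
    exact ⟨v0, fun v => hv0 v (mem_univ v)⟩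
  choose vstar hvstar using hmin
  -- deterministic transport achieving the min
  have hT0 : (fun (u v : V) => if v = vstar u then (1:ℝ) else 0) ∈ 𝒯 := by
    intro u _
    constructor
    · intro v; dsimp only; split <;> norm_num
    · simp
  have h1 : ∀ (c g : V → ℝ), ∑ v, (∑ u, c u * (if v = vstar u then (1:ℝ) else 0)) * g v
      = ∑ u, g (vstar u) * c u := by
    intro c g
    simp only [Finset.sum_mul]
    rw [Finset.sum_comm]
    refine Finset.sum_congr rfl fun u _ => ?_
    simp only [mul_ite, mul_one, mul_zero, ite_mul, zero_mul]
    rw [Finset.sum_ite_eq' Finset.univ (vstar u) (fun v => c u * g v)]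
    simp [mul_comm]
  have hφT0 : φ (Φ (fun (u v : V) => if v = vstar u then (1:ℝ) else 0))
      = ∑ u, (α (vstar u) * x' u + β (vstar u) * y' u) := by
    rw [hΦ]
    dsimp only [LinearMap.coe_mk, AddHom.coe_mk]
    rw [hφ_eval, h1 x' α, h1 y' β, ← Finset.sum_add_distrib]
  have hrlt : r < ∑ u, (α (vstar u) * x' u + β (vstar u) * y' u) := by
    rw [← hφT0]
    exact hφK _ ⟨_, hT0, rfl⟩
  -- the concave function ψ
  classical
  set ψ : ℝ → ℝ := fun t => Finset.univ.inf' univ_nonempty (fun v => α v * t + β v) with hψdef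
  have hψ_le : ∀ (t : ℝ) (v : V), ψ t ≤ α v * t + β v := fun t v =>
    Finset.inf'_le _ (mem_univ v)
  have hψ_eq : ∀ t : ℝ, ∃ v : V, ψ t = α v * t + β v := by
    intro t
    obtain ⟨v, _, hv⟩ := Finset.exists_mem_eq_inf' univ_nonempty (fun v => α v * t + β v)
    exact ⟨v, hv⟩
  have hψconc : ConcaveOn ℝ Set.univ ψ := by
    refine ⟨convex_univ, fun p _ q _ θ η hθ hη hθη => ?_⟩
    obtain ⟨v, hv⟩ := hψ_eq (θ • p + η • q)
    rw [hv]
    have h1 := hψ_le p v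
    have h2 := hψ_le q v
    have e : α v * (θ • p + η • q) + β v = θ * (α v * p + β v) + η * (α v * q + β v) := by
      simp only [smul_eq_mul]
      have hη : η = 1 - θ := by linarith
      rw [hη]; ring
    rw [e]
    simp only [smul_eq_mul]
    have := mul_le_mul_of_nonneg_left h1 hθ
    have := mul_le_mul_of_nonneg_left h2 hη
    linarith
  -- the grid of densities and the signed weight function
  set S : Finset ℝ := (Finset.univ.image (fun v => x v / y v))
      ∪ (Finset.univ.image (fun u => x' u / y' u)) with hS
  set c : ℝ → ℝ := fun t => (∑ v ∈ Finset.univ.filter (fun v => x v / y v = t), y v)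
      - (∑ u ∈ Finset.univ.filter (fun u => x' u / y' u = t), y' u) with hc
  have hmem1 : ∀ v : V, x v / y v ∈ S :=
    fun v => Finset.mem_union_left _ (Finset.mem_image_of_mem _ (mem_univ v))
  have hmem2 : ∀ u : V, x' u / y' u ∈ S :=
    fun u => Finset.mem_union_right _ (Finset.mem_image_of_mem _ (mem_univ u))
  have hfib : ∀ (z w : V → ℝ), (∀ v, z v / w v ∈ S) → ∀ H : ℝ → ℝ,
      ∑ t ∈ S, (∑ v ∈ Finset.univ.filter (fun v => z v / w v = t), w v) * H t
        = ∑ v, w v * H (z v / w v) := by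
    intro z w hmem H
    rw [← Finset.sum_fiberwise_of_maps_to (fun v _ => hmem v) (fun v => w v * H (z v / w v))]
    refine Finset.sum_congr rfl fun t _ => ?_
    rw [Finset.sum_mul]
    refine Finset.sum_congr rfl fun v hv => ?_
    rw [(Finset.mem_filter.mp hv).2]
  have hcmul : ∀ (H : ℝ → ℝ), ∑ t ∈ S, c t * H t
      = ∑ v, y v * H (x v / y v) - ∑ u, y' u * H (x' u / y' u) := by
    intro H
    rw [← hfib x y hmem1 H, ← hfib x' y' hmem2 H, ← Finset.sum_sub_distrib]
    exact Finset.sum_congr rfl fun t _ => by rw [hc]; ring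
  have hyx : ∀ v, y v * (x v / y v) = x v := fun v => by
    rw [mul_comm, div_mul_cancel₀ _ (ne_of_gt (hy v))]
  have hyx' : ∀ u, y' u * (x' u / y' u) = x' u := fun u => by
    rw [mul_comm, div_mul_cancel₀ _ (ne_of_gt (hy' u))]
  have hmass : ∑ t ∈ S, c t = 0 := by
    have h1 := hcmul (fun _ => 1)
    simp only [mul_one] at h1
    rw [h1, hmy, sub_self]
  have hmean : ∑ t ∈ S, c t * t = 0 := by
    rw [hcmul (fun t => t)]
    simp only [hyx, hyx']
    rw [hmx, sub_self]
  have hmax : ∀ (z w : V → ℝ), (∀ v, 0 < w v) → ∀ (γ : ℝ) (v : V),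
      w v * max (z v / w v - γ) 0 = max (z v - γ * w v) 0 := by
    intro z w hw γ v
    rw [mul_max_of_nonneg _ _ (hw v).le, mul_zero]
    congr 1
    rw [mul_sub, mul_comm (w v) (z v / w v), div_mul_cancel₀ _ (ne_of_gt (hw v)),
      mul_comm (w v) γ]
  have hHS : ∀ γ : ℝ, ∑ t ∈ S, c t * max (t - γ) 0 ≤ 0 := by
    intro γ
    rw [hcmul (fun t => max (t - γ) 0)]
    simp only [hmax x y hy γ, hmax x' y' hy' γ]
    have := hdom γ
    linarith
  have hfinal := core_convex_order S c ψ hψconc hmass hmean hHS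
  rw [hcmul ψ] at hfinal
  -- assemble the contradiction
  have step1 : ∑ u, (α (vstar u) * x' u + β (vstar u) * y' u)
      ≤ ∑ u, y' u * ψ (x' u / y' u) := by
    refine Finset.sum_le_sum fun u _ => ?_
    obtain ⟨v0, hv0⟩ := hψ_eq (x' u / y' u)
    have : y' u * ψ (x' u / y' u) = α v0 * x' u + β v0 * y' u := by
      rw [hv0, mul_add, mul_left_comm, hyx' u, mul_comm (y' u) (β v0)]
    rw [this]
    exact hvstar u v0
  have step3 : ∑ v, y v * ψ (x v / y v) ≤ ∑ v, (x v * α v + y v * β v) := by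
    refine Finset.sum_le_sum fun v _ => ?_
    have h := mul_le_mul_of_nonneg_left (hψ_le (x v / y v) v) (hy v).le
    calc y v * ψ (x v / y v) ≤ y v * (α v * (x v / y v) + β v) := h
      _ = x v * α v + y v * β v := by
        rw [mul_add, mul_left_comm, hyx v, mul_comm (α v) (x v)]
  have step4 : φ (x, y) = ∑ v, (x v * α v + y v * β v) := by
    rw [hφ_eval x y, ← Finset.sum_add_distrib]
  linarith [hφxy, hrlt]


end Aux

/-- Theorem 1.5: any locally maximin allocation minimizes `D(x ‖ y)`
over all allocations, for every family `D` of divergences satisfying the data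
processing inequality. -/
theorem universal_minimizer_data_processing (f g : Finset V → ℝ)
    (hdm : DualModular f g)
    (hfV : f Finset.univ = 1) (hgV : g Finset.univ = 1)
    (D : (n : ℕ) → (Fin n → ℝ) → (Fin n → ℝ) → ℝ)
    (hnonneg : ∀ (n : ℕ) (P Q : Fin n → ℝ), (∀ i, 0 ≤ P i) → (∑ i, P i = 1) →
      (∀ i, 0 ≤ Q i) → (∑ i, Q i = 1) → 0 ≤ D n P Q)
    (heq : ∀ (n : ℕ) (P Q : Fin n → ℝ), (∀ i, 0 ≤ P i) → (∑ i, P i = 1) →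
      (∀ i, 0 ≤ Q i) → (∑ i, Q i = 1) → (D n P Q = 0 ↔ P = Q))
    (hdpi : ∀ (n m : ℕ) (T : Fin n → Fin m → ℝ), (∀ i j, 0 ≤ T i j) →
      (∀ i, ∑ j, T i j = 1) →
      ∀ (P Q : Fin n → ℝ), (∀ i, 0 ≤ P i) → (∑ i, P i = 1) →
        (∀ i, 0 ≤ Q i) → (∑ i, Q i = 1) →
        D m (fun j => ∑ i, P i * T i j) (fun j => ∑ i, Q i * T i j) ≤ D n P Q)
    (x y : V → ℝ) (halloc : Allocation f g x y) (hlm : LocallyMaximin f g x y) :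
    ∀ x' y' : V → ℝ, Allocation f g x' y' →
      D (Fintype.card V) (fun i => x ((Fintype.equivFin V).symm i))
          (fun i => y ((Fintype.equivFin V).symm i)) ≤
        D (Fintype.card V) (fun i => x' ((Fintype.equivFin V).symm i))
          (fun i => y' ((Fintype.equivFin V).symm i)) := by
  classical
  intro x' y' halloc'
  rcases isEmpty_or_nonempty V with hV | hV
  · have h1 : (fun i => x ((Fintype.equivFin V).symm i))
        = (fun i => x' ((Fintype.equivFin V).symm i)) := funext fun i => by
      exact (hV.false ((Fintype.equivFin V).symm i)).elim
    have h2 : (fun i => y ((Fintype.equivFin V).symm i))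
        = (fun i => y' ((Fintype.equivFin V).symm i)) := funext fun i => by
      exact (hV.false ((Fintype.equivFin V).symm i)).elim
    rw [h1, h2]
  obtain ⟨hxBf, hyBg⟩ := halloc
  obtain ⟨hxBf', hyBg'⟩ := halloc'
  obtain ⟨hxnn, hxsum, hxge⟩ := hxBf
  obtain ⟨hynn, hysum, hyle⟩ := hyBg
  obtain ⟨hxnn', hxsum', hxge'⟩ := hxBf'
  obtain ⟨hynn', hysum', hyle'⟩ := hyBg'
  have hypos : ∀ (z : V → ℝ), memBg g z → ∀ v, 0 < z v := by
    intro z hz v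
    obtain ⟨hznn, hzsum, hzle⟩ := hz
    have h1 : ∑ u ∈ Finset.univ.erase v, z u ≤ g (Finset.univ.erase v) := hzle _
    have h2 : g (Finset.univ.erase v) < g Finset.univ :=
      hdm.g_strictMono _ _ (Finset.erase_ssubset (Finset.mem_univ v))
    have h3 : ∑ u ∈ Finset.univ.erase v, z u + z v = ∑ u, z u :=
      Finset.sum_erase_add _ _ (Finset.mem_univ v)
    rw [hzsum] at h3
    linarith
  have hy : ∀ v, 0 < y v := hypos y ⟨hynn, hysum, hyle⟩
  have hy' : ∀ v, 0 < y' v := hypos y' ⟨hynn', hysum', hyle'⟩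
  have hsx : ∑ v, x v = 1 := by rw [hxsum, hfV]
  have hsy : ∑ v, y v = 1 := by rw [hysum, hgV]
  have hsx' : ∑ v, x' v = 1 := by rw [hxsum', hfV]
  have hsy' : ∑ v, y' v = 1 := by rw [hysum', hgV]
  -- hockey-stick dominance
  have hdom : ∀ γ : ℝ, ∑ v, max (x v - γ * y v) 0 ≤ ∑ v, max (x' v - γ * y' v) 0 := by
    intro γ
    rcases le_or_gt γ 0 with hγ | hγ
    · have hL : ∑ v, max (x v - γ * y v) 0 = ∑ v, (x v - γ * y v) :=
        Finset.sum_congr rfl fun v _ => max_eq_left (by nlinarith [hxnn v, (hy v).le])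
      have hR : ∑ v, max (x' v - γ * y' v) 0 = ∑ v, (x' v - γ * y' v) :=
        Finset.sum_congr rfl fun v _ => max_eq_left (by nlinarith [hxnn' v, (hy' v).le])
      rw [hL, hR, Finset.sum_sub_distrib, Finset.sum_sub_distrib, ← Finset.mul_sum,
        ← Finset.mul_sum, hsx, hsy, hsx', hsy']
    · by_cases hne : (Finset.univ.filter (fun v => γ < x v / y v)).Nonempty
      · set Sγ := Finset.univ.filter (fun v => γ < x v / y v) with hSγdef
        set ρ := (Sγ.image (fun v => x v / y v)).min' (hne.image _) with hρdef
        have hρmem : ρ ∈ Sγ.image (fun v => x v / y v) := Finset.min'_mem _ _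
        have hργ : γ < ρ := by
          obtain ⟨v, hv, hveq⟩ := Finset.mem_image.mp hρmem
          rw [← hveq]
          exact (Finset.mem_filter.mp hv).2
        have hρpos : 0 < ρ := lt_trans hγ hργ
        have hSeq : Finset.univ.filter (fun v => ρ ≤ x v / y v) = Sγ := by
          ext v
          simp only [Finset.mem_filter, Finset.mem_univ, true_and, hSγdef]
          constructor
          · intro h; exact lt_of_lt_of_le hργ h
          · intro h
            exact Finset.min'_le _ _ (Finset.mem_image_of_mem _
              (Finset.mem_filter.mpr ⟨Finset.mem_univ v, h⟩))
        obtain ⟨hfS, hgS⟩ := hlm ρ hρpos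
        rw [hSeq] at hfS hgS
        have hLHS : ∑ v, max (x v - γ * y v) 0 = ∑ v ∈ Sγ, (x v - γ * y v) := by
          rw [← Finset.sum_filter_add_sum_filter_not Finset.univ (fun v => γ < x v / y v)
            (fun v => max (x v - γ * y v) 0)]
          have h0 : ∑ v ∈ Finset.univ.filter (fun v => ¬ γ < x v / y v),
              max (x v - γ * y v) 0 = 0 := by
            refine Finset.sum_eq_zero fun v hv => ?_
            have hvle : x v / y v ≤ γ := not_lt.mp (Finset.mem_filter.mp hv).2
            have : x v ≤ γ * y v := (div_le_iff₀ (hy v)).mp hvle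
            exact max_eq_right (by linarith)
          have h1 : ∑ v ∈ Sγ, max (x v - γ * y v) 0 = ∑ v ∈ Sγ, (x v - γ * y v) := by
            refine Finset.sum_congr rfl fun v hv => ?_
            have hvlt : γ < x v / y v := (Finset.mem_filter.mp hv).2
            have : γ * y v < x v := (lt_div_iff₀ (hy v)).mp hvlt
            exact max_eq_left (by linarith)
          rw [h0, h1, add_zero]
        have hchain : ∑ v ∈ Sγ, (x v - γ * y v) ≤ ∑ v ∈ Sγ, (x' v - γ * y' v) := by
          rw [Finset.sum_sub_distrib, Finset.sum_sub_distrib, ← Finset.mul_sum, ← Finset.mul_sum]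
          have e1 : ∑ v ∈ Sγ, x v = f Sγ := hfS
          have e2 : ∑ v ∈ Sγ, y v = g Sγ := hgS
          have e3 : f Sγ ≤ ∑ v ∈ Sγ, x' v := hxge' Sγ
          have e4 : ∑ v ∈ Sγ, y' v ≤ g Sγ := hyle' Sγ
          have e5 : γ * ∑ v ∈ Sγ, y' v ≤ γ * ∑ v ∈ Sγ, y v := by
            rw [e2]; exact mul_le_mul_of_nonneg_left e4 hγ.le
          linarith
        have hRHS : ∑ v ∈ Sγ, (x' v - γ * y' v) ≤ ∑ v, max (x' v - γ * y' v) 0 := by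
          have h1 : ∑ v ∈ Sγ, (x' v - γ * y' v) ≤ ∑ v ∈ Sγ, max (x' v - γ * y' v) 0 :=
            Finset.sum_le_sum fun v _ => le_max_left _ _
          have h2 : ∑ v ∈ Sγ, max (x' v - γ * y' v) 0 ≤ ∑ v, max (x' v - γ * y' v) 0 :=
            Finset.sum_le_sum_of_subset_of_nonneg (Finset.subset_univ _)
              (fun v _ _ => le_max_right _ _)
          linarith
        rw [hLHS]
        linarith
      · have hL0 : ∑ v, max (x v - γ * y v) 0 = 0 := by
          refine Finset.sum_eq_zero fun v _ => ?_
          have hvle : x v / y v ≤ γ := by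
            by_contra hcon
            exact hne ⟨v, Finset.mem_filter.mpr ⟨Finset.mem_univ v, not_le.mp hcon⟩⟩
          have : x v ≤ γ * y v := (div_le_iff₀ (hy v)).mp hvle
          exact max_eq_right (by linarith)
        rw [hL0]
        exact Finset.sum_nonneg fun v _ => le_max_right _ _
  obtain ⟨T, hT0, hT1, hTx, hTy⟩ := exists_transport x y x' y' hxnn hy hxnn' hy'
    (by rw [hsx, hsx']) (by rw [hsy, hsy']) hdom
  set e := Fintype.equivFin V with he
  have hrow : ∀ i, ∑ j, T (e.symm i) (e.symm j) = 1 := by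
    intro i
    rw [Equiv.sum_comp e.symm (fun v => T (e.symm i) v)]
    exact hT1 _
  have hmain := hdpi (Fintype.card V) (Fintype.card V)
    (fun i j => T (e.symm i) (e.symm j)) (fun i j => hT0 _ _) hrow
    (fun i => x' (e.symm i)) (fun i => y' (e.symm i))
    (fun i => hxnn' _) (by rw [Equiv.sum_comp e.symm x', hsx'])
    (fun i => (hy' _).le) (by rw [Equiv.sum_comp e.symm y', hsy'])
  have hxeq : (fun j => ∑ i, x' (e.symm i) * T (e.symm i) (e.symm j))
      = fun j => x (e.symm j) := by
    funext j
    rw [Equiv.sum_comp e.symm (fun u => x' u * T u (e.symm j))]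
    exact hTx _
  have hyeq : (fun j => ∑ i, y' (e.symm i) * T (e.symm i) (e.symm j))
      = fun j => y (e.symm j) := by
    funext j
    rw [Equiv.sum_comp e.symm (fun u => y' u * T u (e.symm j))]
    exact hTy _
  rw [hxeq, hyeq] at hmain
  exact hmain
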